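/- Let g = (√5−1)/2, G = (√5+1)/2 and α ∈ (g,1) ∪ (1,G). With φ_α(x) = 1/|x| − d_α(x), d_α(x) = 2⌊1/(2|x|)+(1−α)/2⌋+1, and interpreting φ_α at the endpoints as φ_α(α) = 1/α − 1 and φ_α(α−2) = 1/(2−α) − 1, one has φ_α²(α) = φ_α²(α−2), i.e. φ_α(φ_α(α)) = φ_α(φ_α(α−2)). -/
import Mathlib


/-- The digit function of the α-OCF Gauss map. -/
noncomputable def dA (α x : ℝ) : ℤ := 2 * ⌊1/(2*|x|) + (1-α)/2⌋ + 1

/-- The α-OCF Gauss map. -/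
noncomputable def phiA (α x : ℝ) : ℝ := 1/|x| - dA α x

lemma phiA_shift (α u v : ℝ) (h : 1/|v| = 1/|u| + 2) : phiA α v = phiA α u := by
  unfold phiA dA
  have e : ∀ t : ℝ, (1:ℝ)/(2*t) = (1/t)/2 := fun t => by rw [div_div, mul_comm]
  have h2 : 1/(2*|v|) = 1/(2*|u|) + 1 := by rw [e, e, h]; ring
  rw [h, h2,
    show (1/(2*|u|) + 1) + (1-α)/2 = (1/(2*|u|) + (1-α)/2) + 1 by ring,
    Int.floor_add_one]
  push_cast; ring

/-- For α ∈ (g,1) ∪ (1,G), the second iterates of φ_α at the two endpoints of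
I_α agree: φ_α(φ_α(α)) = φ_α(φ_α(α−2)), where φ_α(α) = 1/α − 1 and
φ_α(α−2) = 1/(2−α) − 1. -/
theorem stmt4 (α : ℝ)
    (hα : α ∈ Set.Ioo ((Real.sqrt 5 - 1)/2) 1 ∪ Set.Ioo 1 ((Real.sqrt 5 + 1)/2)) :
    phiA α (1/α - 1) = phiA α (1/(2-α) - 1) := by
  have h5 : (0:ℝ) ≤ 5 := by norm_num
  have hs := Real.sq_sqrt h5
  have hsn := Real.sqrt_nonneg 5
  have hlt3 : Real.sqrt 5 < 3 := by nlinarith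
  have hgt1 : 1 < Real.sqrt 5 := by nlinarith
  rcases hα with ⟨hl, hr⟩ | ⟨hl, hr⟩
  · -- g < α < 1
    have hα0 : 0 < α := by linarith
    have hα1 : α < 1 := hr
    have h2α : (0:ℝ) < 2 - α := by linarith
    have hx : |1/α - 1| = 1/α - 1 := abs_of_pos (by
      have : 1 < 1/α := by rw [lt_div_iff₀ hα0]; linarith
      linarith)
    have hy : |1/(2-α) - 1| = 1 - 1/(2-α) := by
      rw [abs_of_neg, neg_sub]
      have : 1/(2-α) < 1 := by
        rw [div_lt_one h2α]; linarith
      linarith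
    refine (phiA_shift α (1/α - 1) (1/(2-α) - 1) ?_).symm
    rw [hx, hy]
    have h1 : (1:ℝ)/α - 1 ≠ 0 := by
      have : 1 < 1/α := by rw [lt_div_iff₀ hα0]; linarith
      linarith
    have h2 : (1:ℝ) - 1/(2-α) ≠ 0 := by
      have : 1/(2-α) < 1 := by rw [div_lt_one h2α]; linarith
      linarith
    have hne1 : (1:ℝ) - α ≠ 0 := by intro h; nlinarith
    have hαne : α ≠ 0 := ne_of_gt hα0
    have h2αne : (2:ℝ) - α ≠ 0 := ne_of_gt h2α
    rw [show (1:ℝ) - 1/(2-α) = (1-α)/(2-α) by field_simp; ring,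
        show (1:ℝ)/α - 1 = (1-α)/α by field_simp,
        one_div_div, one_div_div]
    have key : (2-α)/(1-α) - α/(1-α) = 2 := by
      rw [div_sub_div_same, div_eq_iff hne1]; ring
    linarith
  · -- 1 < α < G
    have hα0 : 0 < α := by linarith
    have hα2 : α < 2 := by linarith
    have h2α : (0:ℝ) < 2 - α := by linarith
    have hx : |1/α - 1| = 1 - 1/α := by
      rw [abs_of_neg, neg_sub]
      have : 1/α < 1 := by rw [div_lt_one hα0]; linarith
      linarith
    have hy : |1/(2-α) - 1| = 1/(2-α) - 1 := abs_of_pos (by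
      have : 1 < 1/(2-α) := by rw [lt_div_iff₀ h2α]; linarith
      linarith)
    refine phiA_shift α (1/(2-α) - 1) (1/α - 1) ?_
    rw [hx, hy]
    have h1 : (1:ℝ) - 1/α ≠ 0 := by
      have : 1/α < 1 := by rw [div_lt_one hα0]; linarith
      linarith
    have h2 : (1:ℝ)/(2-α) - 1 ≠ 0 := by
      have : 1 < 1/(2-α) := by rw [lt_div_iff₀ h2α]; linarith
      linarith
    have hne1 : α - (1:ℝ) ≠ 0 := by intro h; nlinarith
    have hαne : α ≠ 0 := ne_of_gt hα0
    have h2αne : (2:ℝ) - α ≠ 0 := ne_of_gt h2α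
    rw [show (1:ℝ)/(2-α) - 1 = (α-1)/(2-α) by field_simp; ring,
        show (1:ℝ) - 1/α = (α-1)/α by field_simp,
        one_div_div, one_div_div]
    have key : α/(α-1) - (2-α)/(α-1) = 2 := by
      rw [div_sub_div_same, div_eq_iff hne1]; ring
    linarith
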